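/- Suppose the entries x_i of X are independent Poisson random variables with respective rates m_i (the PCP model). Then the expected Fisher information matrix I(θ) = E[−∇²_θ ℓ(X|θ)] has entries: for k = l, E[−∂²ℓ/∂A_k(i,r)∂A_k(j,s)] = [i = j] · Σ_{i' : i'_k = i} (1/m_{i'}) ∏_{q≠k} A_q(i'_q,r) A_q(i'_q,s); and for k ≠ l, E[−∂²ℓ/∂A_k(i,r)∂A_l(j,s)] = A_k(i,s) A_l(j,r) Σ_{i' : i'_k = i, i'_l = j} (1/m_{i'}) ∏_{q≠k,l} A_q(i'_q,r) A_q(i'_q,s), where products over the empty set equal 1; in particular the terms present in the observed information that involve x_{i'}/m_{i'} − 1 have expectation zero. -/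

import Mathlib

open Finset

noncomputable section

variable {P R : ℕ} {N : Fin P → ℕ}

/-- Entry `m_i = Σ_r ∏_p A_p(i_p, r)` of the CP parameter tensor. -/
def mTen (A : (p : Fin P) → Fin (N p) → Fin R → ℝ) (i : (p : Fin P) → Fin (N p)) : ℝ :=
  ∑ r, ∏ p, A p (i p) r

/-- PCP loglikelihood `ℓ(X|θ) = Σ_i [ x_i log m_i − m_i − log(x_i!) ]`. -/
def llik (A : (p : Fin P) → Fin (N p) → Fin R → ℝ)
    (X : ((p : Fin P) → Fin (N p)) → ℕ) : ℝ :=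
  ∑ i : (p : Fin P) → Fin (N p),
    ((X i : ℝ) * Real.log (mTen A i) - mTen A i - Real.log (Nat.factorial (X i) : ℝ))

/-- The collection of factor matrices with the single entry `A_k(i,r)` replaced by `t`. -/
def updEntry (A : (q : Fin P) → Fin (N q) → Fin R → ℝ) (k : Fin P) (i : Fin (N k)) (r : Fin R)
    (t : ℝ) : (q : Fin P) → Fin (N q) → Fin R → ℝ :=
  Function.update A k (Function.update (A k) i (Function.update (A k i) r t))

/-- Partial derivative of a function of the factor matrices in the single entry
`A_k(i,r)`, i.e. the derivative of the real function obtained by varying that entry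
with all other entries fixed, evaluated at the current entry value. -/
def pd (f : ((q : Fin P) → Fin (N q) → Fin R → ℝ) → ℝ) (k : Fin P) (i : Fin (N k)) (r : Fin R)
    (A : (q : Fin P) → Fin (N q) → Fin R → ℝ) : ℝ :=
  deriv (fun t => f (updEntry A k i r t)) (A k i r)

/-- Probability of the count tensor `X` under the PCP model: the product over all
multi-indices of the Poisson probabilities `e^{-m_i} m_i^{x_i} / x_i!` (the entries of
`X` are independent Poisson with rates `m_i`). -/
def pmfProd (A : (p : Fin P) → Fin (N p) → Fin R → ℝ)
    (X : ((p : Fin P) → Fin (N p)) → ℕ) : ℝ :=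
  ∏ i : (p : Fin P) → Fin (N p),
    Real.exp (-(mTen A i)) * mTen A i ^ X i / (Nat.factorial (X i) : ℝ)

def cfac (A : (p : Fin P) → Fin (N p) → Fin R → ℝ) (k : Fin P) (r : Fin R)
    (i' : (p : Fin P) → Fin (N p)) : ℝ :=
  ∏ q ∈ Finset.univ.erase k, A q (i' q) r

lemma updEntry_ne {A : (q : Fin P) → Fin (N q) → Fin R → ℝ} {k : Fin P} {i : Fin (N k)}
    {r : Fin R} {t : ℝ} {q : Fin P} (h : q ≠ k) : updEntry A k i r t q = A q :=
  Function.update_of_ne h _ _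

lemma updEntry_k (A : (q : Fin P) → Fin (N q) → Fin R → ℝ) (k : Fin P) (i : Fin (N k))
    (r : Fin R) (t : ℝ) (j' : Fin (N k)) (s : Fin R) :
    updEntry A k i r t k j' s = if j' = i ∧ s = r then t else A k j' s := by
  rcases eq_or_ne j' i with h | h
  · subst h
    rcases eq_or_ne s r with h2 | h2
    · subst h2; simp [updEntry]
    · simp [updEntry, Function.update_of_ne h2, h2]
  · simp [updEntry, Function.update_of_ne h, h]

lemma prod_updEntry (A : (q : Fin P) → Fin (N q) → Fin R → ℝ) (k : Fin P) (i : Fin (N k))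
    (r : Fin R) (t : ℝ) (i' : (p : Fin P) → Fin (N p)) (r' : Fin R) :
    ∏ p, updEntry A k i r t p (i' p) r'
      = (if i' k = i ∧ r' = r then t else A k (i' k) r') * ∏ q ∈ Finset.univ.erase k, A q (i' q) r' := by
  rw [← Finset.mul_prod_erase Finset.univ _ (Finset.mem_univ k)]
  congr 1
  · exact updEntry_k A k i r t (i' k) r'
  · exact Finset.prod_congr rfl fun q hq => by
      rw [updEntry_ne (Finset.ne_of_mem_erase hq)]

lemma mTen_upd (A : (q : Fin P) → Fin (N q) → Fin R → ℝ) (k : Fin P) (i : Fin (N k))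
    (r : Fin R) (t : ℝ) (i' : (p : Fin P) → Fin (N p)) :
    mTen (updEntry A k i r t) i'
      = mTen A i' + (t - A k i r) * (if i' k = i then cfac A k r i' else 0) := by
  unfold mTen cfac
  by_cases h : i' k = i
  · simp only [h, if_pos, true_and]
    have hpt : ∀ r' : Fin R,
        (∏ p, updEntry A k i r t p (i' p) r')
          = (∏ p, A p (i' p) r')
            + (if r' = r then (t - A k i r) * ∏ q ∈ Finset.univ.erase k, A q (i' q) r else 0) := by
      intro r'
      rw [prod_updEntry, ← Finset.mul_prod_erase Finset.univ (fun p => A p (i' p) r') (Finset.mem_univ k)]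
      rcases eq_or_ne r' r with h2 | h2
      · subst h2; rw [h]; simp; ring
      · simp [h2]
    rw [Finset.sum_congr rfl fun r' _ => hpt r', Finset.sum_add_distrib,
      Finset.sum_ite_eq' Finset.univ r, if_pos (Finset.mem_univ r)]
  · simp only [h, if_neg, mul_zero, add_zero, if_false]
    refine Finset.sum_congr rfl fun r' _ => ?_
    rw [prod_updEntry, ← Finset.mul_prod_erase Finset.univ (fun p => A p (i' p) r') (Finset.mem_univ k)]
    simp [h]

lemma mTen_pos {A : (q : Fin P) → Fin (N q) → Fin R → ℝ} (hA : ∀ p j r, 0 < A p j r)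
    (hR : 0 < R) (i' : (p : Fin P) → Fin (N p)) : 0 < mTen A i' := by
  have : Nonempty (Fin R) := ⟨⟨0, hR⟩⟩
  exact Finset.sum_pos (fun r _ => Finset.prod_pos fun p _ => hA _ _ _) Finset.univ_nonempty

lemma updEntry_pos {A : (q : Fin P) → Fin (N q) → Fin R → ℝ} (hA : ∀ p j r, 0 < A p j r)
    {k : Fin P} {i : Fin (N k)} {r : Fin R} {t : ℝ} (ht : 0 < t) :
    ∀ p j s, 0 < updEntry A k i r t p j s := by
  intro p j s
  by_cases hp : p = k
  · subst hp
    rw [updEntry_k]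
    split_ifs
    · exact ht
    · exact hA _ _ _
  · rw [updEntry_ne hp]; exact hA _ _ _

lemma hasDerivAt_affine (c d t₀ : ℝ) :
    HasDerivAt (fun t => c + (t - t₀) * d) d t₀ := by
  simpa using (((hasDerivAt_id t₀).sub_const t₀).mul_const d).const_add c

lemma pd_llik {A' : (q : Fin P) → Fin (N q) → Fin R → ℝ} (hA' : ∀ p j s, 0 < A' p j s)
    (hR : 0 < R) (X : ((p : Fin P) → Fin (N p)) → ℕ) (l : Fin P) (j : Fin (N l)) (s : Fin R) :
    pd (fun A'' => llik A'' X) l j s A'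
      = ∑ i' : (p : Fin P) → Fin (N p),
          (if i' l = j then ((X i' : ℝ) / mTen A' i' - 1) * cfac A' l s i' else 0) := by
  set t₀ := A' l j s with ht₀
  have key : (fun t => llik (updEntry A' l j s t) X)
      = fun t => ∑ i' : (p : Fin P) → Fin (N p),
          ((X i' : ℝ) * Real.log (mTen A' i' + (t - t₀) * (if i' l = j then cfac A' l s i' else 0))
            - (mTen A' i' + (t - t₀) * (if i' l = j then cfac A' l s i' else 0))
            - Real.log (Nat.factorial (X i') : ℝ)) := by
    funext t
    exact Finset.sum_congr rfl fun i' _ => by rw [mTen_upd]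
  rw [pd, key]
  refine HasDerivAt.deriv (HasDerivAt.fun_sum fun i' _ => ?_)
  have hc : 0 < mTen A' i' := mTen_pos hA' hR i'
  set c := mTen A' i'
  set d := if i' l = j then cfac A' l s i' else 0
  have hm : HasDerivAt (fun t => c + (t - t₀) * d) d t₀ := hasDerivAt_affine c d t₀
  have hne : c + (t₀ - t₀) * d ≠ 0 := by simpa using hc.ne'
  have hlog : HasDerivAt (fun t => Real.log (c + (t - t₀) * d)) (d / c) t₀ := by
    simpa using hm.log hne
  have h1 : HasDerivAt
      (fun t => (X i' : ℝ) * Real.log (c + (t - t₀) * d) - (c + (t - t₀) * d)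
        - Real.log (Nat.factorial (X i') : ℝ))
      ((X i' : ℝ) * (d / c) - d) t₀ := ((hlog.const_mul _).sub hm).sub_const _
  refine h1.congr_deriv (Eq.symm ?_)
  show (if i' l = j then ((X i' : ℝ) / c - 1) * cfac A' l s i' else 0) = _
  by_cases hcond : i' l = j
  · simp only [hcond, if_pos]
    field_simp [d, hcond]
    simp [d, hcond]
  · simp [d, hcond]

lemma cfac_upd_self (A : (q : Fin P) → Fin (N q) → Fin R → ℝ) (k : Fin P) (i : Fin (N k))
    (r : Fin R) (t : ℝ) (s : Fin R) (i' : (p : Fin P) → Fin (N p)) :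
    cfac (updEntry A k i r t) k s i' = cfac A k s i' :=
  Finset.prod_congr rfl fun q hq => by rw [updEntry_ne (Finset.ne_of_mem_erase hq)]

lemma cfac_split {k l : Fin P} (hkl : k ≠ l) (A : (q : Fin P) → Fin (N q) → Fin R → ℝ)
    (s : Fin R) (i' : (p : Fin P) → Fin (N p)) :
    cfac A l s i' = A k (i' k) s * ∏ q ∈ (Finset.univ.erase l).erase k, A q (i' q) s := by
  rw [cfac, ← Finset.mul_prod_erase _ _ (Finset.mem_erase.2 ⟨hkl, Finset.mem_univ k⟩)]

lemma cfac_upd_ne {k l : Fin P} (hkl : k ≠ l) (A : (q : Fin P) → Fin (N q) → Fin R → ℝ)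
    (i : Fin (N k)) (r : Fin R) (t : ℝ) (s : Fin R) (i' : (p : Fin P) → Fin (N p)) :
    cfac (updEntry A k i r t) l s i'
      = (if i' k = i ∧ s = r then t else A k (i' k) s)
          * ∏ q ∈ (Finset.univ.erase l).erase k, A q (i' q) s := by
  rw [cfac, ← Finset.mul_prod_erase _ _ (Finset.mem_erase.2 ⟨hkl, Finset.mem_univ k⟩)]
  congr 1
  · exact updEntry_k A k i r t (i' k) s
  · exact Finset.prod_congr rfl fun q hq => by
      rw [updEntry_ne (Finset.mem_erase.1 hq).1]

lemma pdpd_diag {A : (q : Fin P) → Fin (N q) → Fin R → ℝ} (hA : ∀ p j r, 0 < A p j r)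
    (hR : 0 < R) (k : Fin P) (i j : Fin (N k)) (r s : Fin R)
    (X : ((p : Fin P) → Fin (N p)) → ℕ) :
    -(pd (fun A' => pd (fun A'' => llik A'' X) k j s A') k i r A)
      = ∑ i' : (p : Fin P) → Fin (N p),
          (if i' k = j ∧ i' k = i then
            (X i' : ℝ) * cfac A k r i' * cfac A k s i' / (mTen A i') ^ 2 else 0) := by
  set t₀ := A k i r with ht₀def
  have ht₀ : 0 < t₀ := hA k i r
  have hev : (fun t => pd (fun A'' => llik A'' X) k j s (updEntry A k i r t)) =ᶠ[nhds t₀]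
      (fun t => ∑ i' : (p : Fin P) → Fin (N p),
        (if i' k = j then
          ((X i' : ℝ) / (mTen A i' + (t - t₀) * (if i' k = i then cfac A k r i' else 0)) - 1)
            * cfac A k s i' else 0)) := by
    filter_upwards [Ioi_mem_nhds ht₀] with t ht
    rw [pd_llik (updEntry_pos hA ht) hR]
    refine Finset.sum_congr rfl fun i' _ => ?_
    rw [mTen_upd, cfac_upd_self]
  have hpd : pd (fun A' => pd (fun A'' => llik A'' X) k j s A') k i r A
      = ∑ i' : (p : Fin P) → Fin (N p),
          (if i' k = j ∧ i' k = i then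
            -((X i' : ℝ) * cfac A k r i' * cfac A k s i' / (mTen A i') ^ 2) else 0) := by
    rw [pd, hev.deriv_eq]
    refine HasDerivAt.deriv (HasDerivAt.fun_sum fun i' _ => ?_)
    have hc : 0 < mTen A i' := mTen_pos hA hR i'
    set c := mTen A i' with hcdef
    set d := if i' k = i then cfac A k r i' else 0 with hddef
    by_cases h1 : i' k = j
    · simp only [if_pos h1]
      have hne : c + (t₀ - t₀) * d ≠ 0 := by simpa using hc.ne'
      have h2 : HasDerivAt
          (fun t => ((X i' : ℝ) * (c + (t - t₀) * d)⁻¹ - 1) * cfac A k s i')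
          (((X i' : ℝ) * (-d / (c + (t₀ - t₀) * d) ^ 2) - 0) * cfac A k s i') t₀ :=
        ((((hasDerivAt_affine c d t₀).inv hne).const_mul _).sub (hasDerivAt_const _ 1)).mul_const _
      have h3 : HasDerivAt
          (fun t => ((X i' : ℝ) / (c + (t - t₀) * d) - 1) * cfac A k s i')
          (((X i' : ℝ) * (-d / (c + (t₀ - t₀) * d) ^ 2) - 0) * cfac A k s i') t₀ := by
        simpa only [div_eq_mul_inv] using h2
      refine h3.congr_deriv (Eq.symm ?_)
      simp only [sub_self, zero_mul, add_zero]
      by_cases h4 : i' k = i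
      · rw [if_pos ⟨h1, h4⟩, hddef, if_pos h4]
        field_simp
        ring
      · rw [if_neg (fun hc2 => h4 hc2.2), hddef, if_neg h4]
        simp
    · simp only [if_neg h1, if_neg (fun hc2 => h1 (And.left hc2) : ¬(i' k = j ∧ i' k = i))]
      exact hasDerivAt_const _ 0
  rw [hpd, ← Finset.sum_neg_distrib]
  refine Finset.sum_congr rfl fun i' _ => ?_
  split_ifs <;> simp

lemma pdpd_cross {A : (q : Fin P) → Fin (N q) → Fin R → ℝ} (hA : ∀ p j r, 0 < A p j r)
    (hR : 0 < R) {k l : Fin P} (hkl : k ≠ l) (i : Fin (N k)) (j : Fin (N l)) (r s : Fin R)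
    (X : ((p : Fin P) → Fin (N p)) → ℕ) :
    -(pd (fun A' => pd (fun A'' => llik A'' X) l j s A') k i r A)
      = ∑ i' : (p : Fin P) → Fin (N p),
          (if i' l = j then
            ((X i' : ℝ) * (if i' k = i then cfac A k r i' else 0) * cfac A l s i'
                / (mTen A i') ^ 2
              - ((X i' : ℝ) / mTen A i' - 1)
                  * (if i' k = i ∧ s = r then
                      ∏ q ∈ (Finset.univ.erase l).erase k, A q (i' q) s else 0))
          else 0) := by
  set t₀ := A k i r with ht₀def
  have ht₀ : 0 < t₀ := hA k i r
  have hev : (fun t => pd (fun A'' => llik A'' X) l j s (updEntry A k i r t)) =ᶠ[nhds t₀]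
      (fun t => ∑ i' : (p : Fin P) → Fin (N p),
        (if i' l = j then
          ((X i' : ℝ) / (mTen A i' + (t - t₀) * (if i' k = i then cfac A k r i' else 0)) - 1)
            * ((if i' k = i ∧ s = r then t else A k (i' k) s)
                * ∏ q ∈ (Finset.univ.erase l).erase k, A q (i' q) s)
        else 0)) := by
    filter_upwards [Ioi_mem_nhds ht₀] with t ht
    rw [pd_llik (updEntry_pos hA ht) hR]
    refine Finset.sum_congr rfl fun i' _ => ?_
    rw [mTen_upd, cfac_upd_ne hkl]
  have hpd : pd (fun A' => pd (fun A'' => llik A'' X) l j s A') k i r A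
      = ∑ i' : (p : Fin P) → Fin (N p),
          (if i' l = j then
            -((X i' : ℝ) * (if i' k = i then cfac A k r i' else 0) * cfac A l s i'
                / (mTen A i') ^ 2
              - ((X i' : ℝ) / mTen A i' - 1)
                  * (if i' k = i ∧ s = r then
                      ∏ q ∈ (Finset.univ.erase l).erase k, A q (i' q) s else 0))
          else 0) := by
    rw [pd, hev.deriv_eq]
    refine HasDerivAt.deriv (HasDerivAt.fun_sum fun i' _ => ?_)
    have hc : 0 < mTen A i' := mTen_pos hA hR i'
    set c := mTen A i' with hcdef
    set d := if i' k = i then cfac A k r i' else 0 with hddef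
    set Q := ∏ q ∈ (Finset.univ.erase l).erase k, A q (i' q) s with hQdef
    by_cases h1 : i' l = j
    · simp only [if_pos h1]
      have hne : c + (t₀ - t₀) * d ≠ 0 := by simpa using hc.ne'
      have hf : HasDerivAt
          (fun t => (X i' : ℝ) / (c + (t - t₀) * d) - 1)
          ((X i' : ℝ) * (-d / (c + (t₀ - t₀) * d) ^ 2) - 0) t₀ := by
        have h2 : HasDerivAt (fun t => (X i' : ℝ) * (c + (t - t₀) * d)⁻¹ - 1)
            ((X i' : ℝ) * (-d / (c + (t₀ - t₀) * d) ^ 2) - 0) t₀ :=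
          (((hasDerivAt_affine c d t₀).inv hne).const_mul (X i' : ℝ)).sub
            (hasDerivAt_const _ 1)
        simpa only [div_eq_mul_inv] using h2
      have hg0 : HasDerivAt
          (fun t : ℝ => if i' k = i ∧ s = r then t else A k (i' k) s)
          (if i' k = i ∧ s = r then 1 else 0) t₀ := by
        by_cases h2 : i' k = i ∧ s = r
        · simp only [if_pos h2]; exact hasDerivAt_id t₀
        · simp only [if_neg h2]; exact hasDerivAt_const _ _
      have hg : HasDerivAt
          (fun t : ℝ => (if i' k = i ∧ s = r then t else A k (i' k) s) * Q)
          ((if i' k = i ∧ s = r then 1 else 0) * Q) t₀ := hg0.mul_const Q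
      have h3 := hf.mul hg
      refine h3.congr_deriv (Eq.symm ?_)
      simp only [sub_self, zero_mul, add_zero, sub_zero]
      have hcf : cfac A l s i' = A k (i' k) s * Q := cfac_split hkl A s i'
      rw [hcf]
      by_cases h2 : i' k = i ∧ s = r
      · simp only [if_pos h2]
        rw [h2.1, h2.2, ← ht₀def]
        simp only [hddef, if_pos h2.1]
        field_simp
        ring
      · simp only [if_neg h2]
        by_cases h4 : i' k = i
        · simp only [hddef, if_pos h4]
          field_simp
          ring
        · simp [hddef, if_neg h4]
    · simp only [if_neg h1]
      exact hasDerivAt_const _ 0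
  rw [hpd, ← Finset.sum_neg_distrib]
  refine Finset.sum_congr rfl fun i' _ => ?_
  split_ifs <;> simp

def poi (μ : ℝ) (n : ℕ) : ℝ := Real.exp (-μ) * μ ^ n / (Nat.factorial n : ℝ)

lemma summable_poi (μ : ℝ) : Summable (poi μ) := by
  have := (Real.summable_pow_div_factorial μ).mul_left (Real.exp (-μ))
  refine this.congr fun n => ?_
  rw [poi, mul_div_assoc]

lemma tsum_poi (μ : ℝ) : ∑' n, poi μ n = 1 := by
  have h : ∑' n : ℕ, μ ^ n / (Nat.factorial n : ℝ) = Real.exp μ := by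
    rw [Real.exp_eq_exp_ℝ, NormedSpace.exp_eq_tsum_div]
  calc ∑' n, poi μ n = ∑' n : ℕ, Real.exp (-μ) * (μ ^ n / (Nat.factorial n : ℝ)) := by
        refine tsum_congr fun n => ?_; rw [poi, mul_div_assoc]
    _ = Real.exp (-μ) * Real.exp μ := by rw [tsum_mul_left, h]
    _ = 1 := by rw [← Real.exp_add]; simp

lemma poi_succ_mul (μ : ℝ) (n : ℕ) : poi μ (n + 1) * ((n : ℝ) + 1) = μ * poi μ n := by
  have h1 : ((Nat.factorial (n + 1) : ℕ) : ℝ) = ((n : ℝ) + 1) * (Nat.factorial n : ℝ) := by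
    rw [Nat.factorial_succ]; push_cast; ring
  have h2 : (Nat.factorial n : ℝ) ≠ 0 := Nat.cast_ne_zero.2 (Nat.factorial_ne_zero n)
  have h3 : ((n : ℝ) + 1) ≠ 0 := by positivity
  rw [poi, poi, h1]
  field_simp
  ring

lemma summable_poi_mul (μ : ℝ) : Summable (fun n => poi μ n * (n : ℝ)) := by
  rw [← summable_nat_add_iff 1]
  refine ((summable_poi μ).mul_left μ).congr fun n => ?_
  push_cast
  rw [poi_succ_mul]

lemma tsum_poi_mul (μ : ℝ) : ∑' n, poi μ n * (n : ℝ) = μ := by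
  rw [Summable.tsum_eq_zero_add (summable_poi_mul μ)]
  simp only [Nat.cast_zero, mul_zero, zero_add]
  have : ∀ n : ℕ, poi μ (n + 1) * ((n + 1 : ℕ) : ℝ) = μ * poi μ n := by
    intro n; push_cast; rw [poi_succ_mul]
  rw [tsum_congr this, tsum_mul_left, tsum_poi, mul_one]

lemma pi_tsum_fin {n : ℕ} (f : Fin n → ℕ → ℝ) (hf : ∀ i, Summable (f i)) :
    Summable (fun X : Fin n → ℕ => ∏ i, f i (X i)) ∧
      ∑' X : Fin n → ℕ, ∏ i, f i (X i) = ∏ i, ∑' m, f i m := by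
  induction n with
  | zero =>
      haveI : Unique (Fin 0 → ℕ) := ⟨⟨fun i => i.elim0⟩, fun a => funext fun i => i.elim0⟩
      constructor
      · exact .of_finite
      · simp [tsum_eq_single (default : Fin 0 → ℕ) (fun b hb => absurd (Subsingleton.elim b default) hb)]
  | succ n ih =>
      obtain ⟨ihS, ihT⟩ := ih (fun i => f i.succ) (fun i => hf i.succ)
      set e : (ℕ × (Fin n → ℕ)) ≃ (Fin (n + 1) → ℕ) :=
        (Fin.consEquiv (fun _ : Fin (n + 1) => ℕ))
      have hfun : ∀ p : ℕ × (Fin n → ℕ),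
          (∏ i, f i (e p i)) = f 0 p.1 * ∏ i : Fin n, f i.succ (p.2 i) := by
        intro p
        rw [Fin.prod_univ_succ]
        simp [e, Fin.consEquiv]
      have hsum2 : Summable (fun p : ℕ × (Fin n → ℕ) => f 0 p.1 * ∏ i, f i.succ (p.2 i)) := by
        apply Summable.of_norm
        have := Summable.mul_of_nonneg ((hf 0).abs) (ihS.abs)
          (fun n => abs_nonneg _) (fun n => abs_nonneg _)
        refine this.congr fun p => ?_
        simp [abs_mul, Finset.abs_prod]
      have hS : Summable (fun X : Fin (n + 1) → ℕ => ∏ i, f i (X i)) := by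
        rw [← e.summable_iff]
        exact hsum2.congr fun p => (hfun p).symm
      refine ⟨hS, ?_⟩
      rw [← e.tsum_eq, tsum_congr hfun,
        Summable.tsum_prod' hsum2 (fun a => ihS.mul_left (f 0 a))]
      calc ∑' (a : ℕ), ∑' (Y : Fin n → ℕ), f 0 a * ∏ i : Fin n, f i.succ (Y i)
          = ∑' a, f 0 a * ∑' Y : Fin n → ℕ, ∏ i : Fin n, f i.succ (Y i) := by
            refine tsum_congr fun a => ?_; rw [tsum_mul_left]
        _ = (∑' a, f 0 a) * ∑' Y : Fin n → ℕ, ∏ i : Fin n, f i.succ (Y i) := tsum_mul_right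
        _ = ∏ i : Fin (n + 1), ∑' m, f i m := by rw [ihT, Fin.prod_univ_succ]

lemma pi_tsum {ι : Type*} [Fintype ι] (f : ι → ℕ → ℝ) (hf : ∀ i, Summable (f i)) :
    Summable (fun X : ι → ℕ => ∏ i, f i (X i)) ∧
      ∑' X : ι → ℕ, ∏ i, f i (X i) = ∏ i, ∑' m, f i m := by
  classical
  set e := Fintype.equivFin ι
  set E : (Fin (Fintype.card ι) → ℕ) ≃ (ι → ℕ) := Equiv.arrowCongr e.symm (Equiv.refl ℕ)
  obtain ⟨hS, hT⟩ := pi_tsum_fin (fun j => f (e.symm j)) (fun j => hf _)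
  have hfun : ∀ Y : Fin (Fintype.card ι) → ℕ,
      ∏ i : ι, f i (E Y i) = ∏ j, f (e.symm j) (Y j) := by
    intro Y
    rw [← Equiv.prod_comp e.symm (fun i => f i (E Y i))]
    refine Finset.prod_congr rfl fun j _ => ?_
    simp [E, Equiv.arrowCongr]
  constructor
  · rw [← E.summable_iff]
    exact hS.congr fun Y => (hfun Y).symm
  · rw [← E.tsum_eq, tsum_congr hfun, hT, ← Equiv.prod_comp e.symm (fun i => ∑' m, f i m)]

lemma pmfProd_eq (A : (p : Fin P) → Fin (N p) → Fin R → ℝ)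
    (X : ((p : Fin P) → Fin (N p)) → ℕ) :
    pmfProd A X = ∏ i, poi (mTen A i) (X i) := rfl

lemma pmfProd_tsum (A : (p : Fin P) → Fin (N p) → Fin R → ℝ) :
    Summable (pmfProd A) ∧ ∑' X, pmfProd A X = 1 := by
  obtain ⟨hS, hT⟩ := pi_tsum (fun i : (p : Fin P) → Fin (N p) => poi (mTen A i))
    (fun i => summable_poi _)
  constructor
  · exact hS.congr fun X => (pmfProd_eq A X).symm
  · rw [tsum_congr (pmfProd_eq A), hT]
    simp [tsum_poi]

lemma pmfProd_tsum_mul (A : (p : Fin P) → Fin (N p) → Fin R → ℝ)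
    (i₀ : (p : Fin P) → Fin (N p)) :
    Summable (fun X : ((p : Fin P) → Fin (N p)) → ℕ => pmfProd A X * (X i₀ : ℝ)) ∧
      ∑' X : ((p : Fin P) → Fin (N p)) → ℕ, pmfProd A X * (X i₀ : ℝ) = mTen A i₀ := by
  classical
  set g : ((p : Fin P) → Fin (N p)) → ℕ → ℝ :=
    Function.update (fun i n => poi (mTen A i) n) i₀ (fun n => poi (mTen A i₀) n * n)
      with hgdef
  have hgS : ∀ i, Summable (g i) := by
    intro i
    by_cases hi : i = i₀
    · subst hi; rw [hgdef, Function.update_self]; exact summable_poi_mul _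
    · rw [hgdef, Function.update_of_ne hi]; exact summable_poi _
  have h1 : ∀ X : ((p : Fin P) → Fin (N p)) → ℕ,
      ∏ i ∈ Finset.univ.erase i₀, g i (X i)
        = ∏ i ∈ Finset.univ.erase i₀, poi (mTen A i) (X i) :=
    fun X => Finset.prod_congr rfl fun i hi => by
      rw [hgdef, Function.update_of_ne (Finset.ne_of_mem_erase hi)]
  have hpoint : ∀ X, ∏ i, g i (X i) = pmfProd A X * (X i₀ : ℝ) := by
    intro X
    rw [← Finset.mul_prod_erase Finset.univ (fun i => g i (X i)) (Finset.mem_univ i₀), h1,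
      pmfProd_eq, ← Finset.mul_prod_erase Finset.univ (fun i => poi (mTen A i) (X i))
        (Finset.mem_univ i₀), hgdef, Function.update_self]
    ring
  obtain ⟨hS, hT⟩ := pi_tsum g hgS
  constructor
  · exact hS.congr hpoint
  · rw [← tsum_congr hpoint, hT,
      ← Finset.mul_prod_erase Finset.univ (fun i => ∑' m, g i m) (Finset.mem_univ i₀)]
    have h2 : ∏ i ∈ Finset.univ.erase i₀, ∑' m, g i m = 1 := by
      refine Finset.prod_eq_one fun i hi => ?_
      rw [hgdef, Function.update_of_ne (Finset.ne_of_mem_erase hi), tsum_poi]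
    rw [h2, hgdef, Function.update_self, tsum_poi_mul, mul_one]

lemma expect_affine (A : (p : Fin P) → Fin (N p) → Fin R → ℝ)
    (a b : ((p : Fin P) → Fin (N p)) → ℝ) :
    ∑' X : ((p : Fin P) → Fin (N p)) → ℕ,
        pmfProd A X * (∑ i', (a i' * (X i' : ℝ) + b i'))
      = ∑ i', (a i' * mTen A i' + b i') := by
  have S1 := (pmfProd_tsum A).1
  have T1 := (pmfProd_tsum A).2
  have hpt : ∀ X : ((p : Fin P) → Fin (N p)) → ℕ,
      pmfProd A X * (∑ i', (a i' * (X i' : ℝ) + b i'))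
        = ∑ i', (a i' * (pmfProd A X * (X i' : ℝ)) + b i' * pmfProd A X) := by
    intro X
    rw [Finset.mul_sum]
    exact Finset.sum_congr rfl fun i' _ => by ring
  rw [tsum_congr hpt, Summable.tsum_finsetSum (fun i' _ =>
    (((pmfProd_tsum_mul A i').1.mul_left (a i')).add (S1.mul_left (b i'))))]
  refine Finset.sum_congr rfl fun i' _ => ?_
  rw [Summable.tsum_add ((pmfProd_tsum_mul A i').1.mul_left (a i')) (S1.mul_left (b i')),
    tsum_mul_left, tsum_mul_left, (pmfProd_tsum_mul A i').2, T1, mul_one]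


/-- **Expected Fisher information of the PCP model.** When the entries of `X` are
independent Poisson with rates `m_i`, the expectation (a sum over all count tensors
weighted by their PCP probability) of the negative second partial derivatives of `ℓ`
equals: for `k = l`, `[i = j] · Σ_{i' : i'_k = i} (1/m_{i'}) ∏_{q≠k} A_q(i'_q,r) A_q(i'_q,s)`;
and for `k ≠ l`, `A_k(i,s) A_l(j,r) Σ_{i' : i'_k=i, i'_l=j} (1/m_{i'})
∏_{q≠k,l} A_q(i'_q,r) A_q(i'_q,s)` (products over the empty set equal `1`); the terms of
the observed information involving `x_{i'}/m_{i'} − 1` have expectation zero. -/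
theorem stmt_10 (P R : ℕ) (hP : 2 ≤ P) (hR : 1 ≤ R) (N : Fin P → ℕ) (hN : ∀ p, 1 ≤ N p)
    (A : (p : Fin P) → Fin (N p) → Fin R → ℝ) (hA : ∀ p j r, 0 < A p j r) :
    (∀ (k : Fin P) (i j : Fin (N k)) (r s : Fin R),
      ∑' X : ((p : Fin P) → Fin (N p)) → ℕ,
          pmfProd A X * -(pd (fun A' => pd (fun A'' => llik A'' X) k j s A') k i r A) =
        (if i = j then
          ∑ i' ∈ Finset.univ.filter (fun i' : (q : Fin P) → Fin (N q) => i' k = i),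
            (1 / mTen A i') * ∏ q ∈ Finset.univ.erase k, A q (i' q) r * A q (i' q) s
        else 0)) ∧
    (∀ (k l : Fin P), k ≠ l → ∀ (i : Fin (N k)) (j : Fin (N l)) (r s : Fin R),
      ∑' X : ((p : Fin P) → Fin (N p)) → ℕ,
          pmfProd A X * -(pd (fun A' => pd (fun A'' => llik A'' X) l j s A') k i r A) =
        A k i s * A l j r *
          ∑ i' ∈ Finset.univ.filter
              (fun i' : (q : Fin P) → Fin (N q) => i' k = i ∧ i' l = j),
            (1 / mTen A i') *
              ∏ q ∈ (Finset.univ.erase k).erase l, A q (i' q) r * A q (i' q) s) := by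
  have hR' : 0 < R := hR
  constructor
  · intro k i j r s
    have hval : ∀ X : ((p : Fin P) → Fin (N p)) → ℕ,
        pmfProd A X * -(pd (fun A' => pd (fun A'' => llik A'' X) k j s A') k i r A)
          = pmfProd A X * (∑ i' : (q : Fin P) → Fin (N q),
              ((if i' k = j ∧ i' k = i then
                  cfac A k r i' * cfac A k s i' / (mTen A i') ^ 2 else 0) * (X i' : ℝ)
                + 0)) := by
      intro X
      rw [pdpd_diag hA hR' k i j r s X]
      congr 1
      refine Finset.sum_congr rfl fun i' _ => ?_
      split_ifs <;> ring
    rw [tsum_congr hval,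
      expect_affine A (fun i' => if i' k = j ∧ i' k = i then
        cfac A k r i' * cfac A k s i' / (mTen A i') ^ 2 else 0) (fun _ => 0)]
    by_cases hij : i = j
    · subst hij
      rw [if_pos rfl, Finset.sum_filter]
      refine Finset.sum_congr rfl fun i' _ => ?_
      have hc := (mTen_pos hA hR' i').ne'
      by_cases h : i' k = i
      · rw [if_pos ⟨h, h⟩, if_pos h, add_zero, Finset.prod_mul_distrib]
        show cfac A k r i' * cfac A k s i' / mTen A i' ^ 2 * mTen A i'
          = 1 / mTen A i' * (cfac A k r i' * cfac A k s i')
        field_simp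
      · rw [if_neg (fun hc2 => h hc2.2), if_neg h, zero_mul, add_zero]
    · rw [if_neg hij]
      refine Finset.sum_eq_zero fun i' _ => ?_
      rw [if_neg (fun hc2 => hij (hc2.2.symm.trans hc2.1)), zero_mul, add_zero]
  · intro k l hkl i j r s
    have hval : ∀ X : ((p : Fin P) → Fin (N p)) → ℕ,
        pmfProd A X * -(pd (fun A' => pd (fun A'' => llik A'' X) l j s A') k i r A)
          = pmfProd A X * (∑ i' : (q : Fin P) → Fin (N q),
              ((if i' l = j then
                  ((if i' k = i then cfac A k r i' else 0) * cfac A l s i' / (mTen A i') ^ 2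
                    - (if i' k = i ∧ s = r then
                        ∏ q ∈ (Finset.univ.erase l).erase k, A q (i' q) s else 0) / mTen A i')
                else 0) * (X i' : ℝ)
                + (if i' l = j then
                    (if i' k = i ∧ s = r then
                      ∏ q ∈ (Finset.univ.erase l).erase k, A q (i' q) s else 0) else 0))) := by
      intro X
      rw [pdpd_cross hA hR' hkl i j r s X]
      congr 1
      refine Finset.sum_congr rfl fun i' _ => ?_
      by_cases h1 : i' l = j
      · simp only [if_pos h1]; ring
      · simp only [if_neg h1]; ring
    rw [tsum_congr hval, expect_affine A _ _]
    rw [Finset.mul_sum, Finset.sum_filter]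
    refine Finset.sum_congr rfl fun i' _ => ?_
    have hc := (mTen_pos hA hR' i').ne'
    by_cases h1 : i' l = j
    · by_cases h2 : i' k = i
      · rw [if_pos (show i' k = i ∧ i' l = j from ⟨h2, h1⟩)]
        simp only [if_pos h1, if_pos h2]
        have hcf1 : cfac A k r i' = A l (i' l) r * ∏ q ∈ (Finset.univ.erase k).erase l, A q (i' q) r :=
          cfac_split hkl.symm A r i'
        have hcf2 : cfac A l s i' = A k (i' k) s * ∏ q ∈ (Finset.univ.erase k).erase l, A q (i' q) s := by
          rw [cfac_split hkl A s i', Finset.erase_right_comm]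
        have hQ : (if i' k = i ∧ s = r then
            ∏ q ∈ (Finset.univ.erase l).erase k, A q (i' q) s else 0)
              = (if i' k = i ∧ s = r then
            ∏ q ∈ (Finset.univ.erase k).erase l, A q (i' q) s else 0) := by
          rw [Finset.erase_right_comm]
        rw [hQ, hcf1, hcf2, h1, h2, Finset.prod_mul_distrib]
        by_cases h3 : s = r
        · rw [if_pos (show i = i ∧ s = r from ⟨rfl, h3⟩)]
          field_simp
          ring
        · rw [if_neg (fun hc2 => h3 hc2.2)]
          field_simp
          ring
      · rw [if_neg (fun hc2 => h2 hc2.1 : ¬(i' k = i ∧ i' l = j))]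
        simp only [if_pos h1, if_neg h2, if_neg (fun hc2 => h2 (And.left hc2) : ¬(i' k = i ∧ s = r))]
        ring
    · rw [if_neg (fun hc2 => h1 hc2.2 : ¬(i' k = i ∧ i' l = j))]
      simp only [if_neg h1]
      ring
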